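/- Let q ≥ 4 and n ≥ 6 be integers and t = ⌈log₂ n⌉. Then the number of message bits k = ⌊(n−3t+3)·log₂ q⌋ + (t−3)·⌊log₂((q−1)²)⌋ + ⌊log₂(q−1)⌋ accommodated by the systematic q-ary VT encoder satisfies k ≥ n·log₂ q − t·(log₂ q + 2) − (2·log₂ q − 4). -/

import Mathlib

private lemma cast_q_sub_one (q : ℕ) (hq : 4 ≤ q) :
    (q : ℝ) - 1 = ((q - 1 : ℕ) : ℝ) := by
  have : (1:ℕ) ≤ q := by omega
  push_cast [this]; ring

private lemma logb_q_le (q : ℕ) (hq : 4 ≤ q) :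
    Real.logb 2 q ≤ (Nat.log 2 (q - 1) : ℝ) + 1 := by
  set j := Nat.log 2 (q - 1) with hj
  have h1 : q - 1 < 2 ^ (j + 1) := Nat.lt_pow_succ_log_self (by norm_num) _
  have h2 : q ≤ 2 ^ (j + 1) := by omega
  have h2' : (q : ℝ) ≤ (2 : ℝ) ^ (j + 1) := by exact_mod_cast h2
  have := Real.logb_le_logb_of_le (b := 2) (by norm_num)
    (show (0:ℝ) < q by positivity) h2'
  calc Real.logb 2 q ≤ Real.logb 2 ((2:ℝ) ^ (j + 1)) := this
    _ = (j + 1 : ℕ) * Real.logb 2 2 := Real.logb_pow 2 2 (j+1)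
    _ = (j : ℝ) + 1 := by
        rw [Real.logb_self_eq_one (by norm_num)]; push_cast; ring

private lemma floor_ge_natLog (q : ℕ) (hq : 4 ≤ q) (m : ℕ) (hm : 1 ≤ m) :
    (Nat.log 2 m : ℝ) ≤ ((⌊Real.logb 2 ((m : ℕ) : ℝ)⌋ : ℤ) : ℝ) := by
  set j := Nat.log 2 m with hj
  have h1 : (2 : ℕ) ^ j ≤ m := Nat.pow_log_le_self 2 (by omega)
  have h1' : (2 : ℝ) ^ j ≤ (m : ℝ) := by exact_mod_cast h1
  have hlog : (j : ℝ) ≤ Real.logb 2 (m : ℝ) := by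
    have := Real.logb_le_logb_of_le (b := 2) (by norm_num)
      (show (0:ℝ) < (2:ℝ)^j by positivity) h1'
    calc (j : ℝ) = (j : ℕ) * Real.logb 2 2 := by
          rw [Real.logb_self_eq_one (by norm_num)]; ring
      _ = Real.logb 2 ((2:ℝ) ^ j) := (Real.logb_pow 2 2 j).symm
      _ ≤ Real.logb 2 (m : ℝ) := this
  exact_mod_cast Int.le_floor.mpr (by exact_mod_cast hlog)

private lemma auxB (q : ℕ) (hq : 4 ≤ q) :
    Real.logb 2 q - 1 ≤ ((⌊Real.logb 2 ((q : ℝ) - 1)⌋ : ℤ) : ℝ) := by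
  rw [cast_q_sub_one q hq]
  have h1 := floor_ge_natLog q hq (q - 1) (by omega)
  have h2 := logb_q_le q hq
  linarith

private lemma auxA (q : ℕ) (hq : 4 ≤ q) :
    2 * Real.logb 2 q - 2 ≤ ((⌊Real.logb 2 (((q : ℝ) - 1) ^ 2)⌋ : ℤ) : ℝ) := by
  have hc : ((q : ℝ) - 1) ^ 2 = (((q - 1) ^ 2 : ℕ) : ℝ) := by
    rw [cast_q_sub_one q hq]; push_cast; ring
  rw [hc]
  set m := Nat.log 2 ((q - 1) ^ 2) with hm
  have h1 := floor_ge_natLog q hq ((q - 1) ^ 2) (Nat.one_le_pow 2 (q - 1) (by omega))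
  rw [← hm] at h1
  -- show logb 2 q ≤ (m + 2)/2, i.e. q^2 ≤ 2^(m+2)
  have hlt : (q - 1) ^ 2 < 2 ^ (m + 1) := Nat.lt_pow_succ_log_self (by norm_num) _
  have hq2 : q ^ 2 ≤ 2 ^ (m + 2) := by
    have h3 : q ^ 2 ≤ 2 * (q - 1) ^ 2 + 2 := by nlinarith [Nat.sub_add_cancel (show 1 ≤ q by omega)]
    calc q ^ 2 ≤ 2 * (q - 1) ^ 2 + 2 := h3
      _ ≤ 2 * 2 ^ (m + 1) := by omega
      _ = 2 ^ (m + 2) := by ring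
  have hq2' : (q : ℝ) ^ 2 ≤ (2 : ℝ) ^ (m + 2) := by exact_mod_cast hq2
  have hub : 2 * Real.logb 2 q ≤ (m : ℝ) + 2 := by
    have := Real.logb_le_logb_of_le (b := 2) (by norm_num)
      (show (0:ℝ) < (q:ℝ)^2 by positivity) hq2'
    rw [Real.logb_pow, Real.logb_pow, Real.logb_self_eq_one (by norm_num)] at this
    push_cast at this
    linarith
  linarith

theorem encoder_message_bits_lower_bound (q n : ℕ) (hq : 4 ≤ q) (hn : 6 ≤ n)
    (t : ℕ) (ht : t = Nat.clog 2 n) (k : ℝ)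
    (hk : k = ((⌊((n : ℝ) - 3 * t + 3) * Real.logb 2 q⌋ : ℤ) : ℝ)
        + ((t : ℝ) - 3) * ((⌊Real.logb 2 (((q : ℝ) - 1) ^ 2)⌋ : ℤ) : ℝ)
        + ((⌊Real.logb 2 ((q : ℝ) - 1)⌋ : ℤ) : ℝ)) :
    k ≥ (n : ℝ) * Real.logb 2 q - (t : ℝ) * (Real.logb 2 q + 2)
        - (2 * Real.logb 2 q - 4) := by
  have ht3 : 3 ≤ t := by
    rw [ht]
    have : 2 ^ 2 < n := by omega
    have := (Nat.lt_clog_iff_pow_lt (by norm_num)).mpr this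
    omega
  have ht3' : (0 : ℝ) ≤ (t : ℝ) - 3 := by
    have : (3 : ℝ) ≤ (t : ℝ) := by exact_mod_cast ht3
    linarith
  set L := Real.logb 2 q with hL
  have hF1 : ((n : ℝ) - 3 * t + 3) * L - 1
      ≤ ((⌊((n : ℝ) - 3 * t + 3) * L⌋ : ℤ) : ℝ) :=
    le_of_lt (Int.sub_one_lt_floor _)
  have hA := auxA q hq
  have hB := auxB q hq
  have hA' : ((t : ℝ) - 3) * (2 * L - 2)
      ≤ ((t : ℝ) - 3) * ((⌊Real.logb 2 (((q : ℝ) - 1) ^ 2)⌋ : ℤ) : ℝ) :=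
    mul_le_mul_of_nonneg_left hA ht3'
  rw [hk]
  nlinarith [hF1, hA', hB]
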